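/- The composition s ∘ h : ℝ^k → ℝ^k, where h is the element-wise hyperbolic tangent and s the squashing function, is a homeomorphism from ℝ^k onto the open Euclidean unit ball {x ∈ ℝ^k : ‖x‖_2 < 1}. -/

import Mathlib

/-- The sup norm `‖x‖_∞ = max_i |x_i|` of a vector in Euclidean space. -/
noncomputable def supNorm {k : ℕ} (x : EuclideanSpace ℝ (Fin k)) : ℝ :=
  ‖(WithLp.equiv 2 (Fin k → ℝ)) x‖

/-- The element-wise hyperbolic tangent map `h`. -/
noncomputable def tanhMap (k : ℕ) (x : EuclideanSpace ℝ (Fin k)) :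
    EuclideanSpace ℝ (Fin k) := WithLp.toLp 2 (fun i => Real.tanh (x i))

open Classical in
/-- The squashing function `s(x) = x · (‖x‖_∞ / ‖x‖_2)` for `x ≠ 0`, `s(0) = 0`. -/
noncomputable def squash {k : ℕ} (x : EuclideanSpace ℝ (Fin k)) :
    EuclideanSpace ℝ (Fin k) :=
  if x = 0 then 0 else (supNorm x / ‖x‖) • x

namespace SquashTanhAux

/-! ### Facts about `tanh` and its inverse -/

lemma tanh_eq' (x : ℝ) : Real.tanh x = (Real.exp (2*x) - 1) / (Real.exp (2*x) + 1) := by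
  have h1 := Real.exp_pos x
  have h2 := Real.exp_pos (-x)
  have h3 : Real.exp x * Real.exp (-x) = 1 := by rw [← Real.exp_add]; simp
  have h4 : Real.exp (2*x) = Real.exp x * Real.exp x := by rw [← Real.exp_add]; ring_nf
  rw [Real.tanh_eq_sinh_div_cosh, Real.sinh_eq, Real.cosh_eq, h4]
  rw [div_eq_div_iff (by positivity) (by positivity)]
  nlinarith [h3]

lemma neg_one_lt_tanh (x : ℝ) : -1 < Real.tanh x := by
  rw [tanh_eq']
  have h := Real.exp_pos (2*x)
  rw [lt_div_iff₀ (by linarith)]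
  linarith

lemma tanh_lt_one (x : ℝ) : Real.tanh x < 1 := by
  rw [tanh_eq']
  have h := Real.exp_pos (2*x)
  rw [div_lt_one (by linarith)]
  linarith

lemma abs_tanh_lt_one (x : ℝ) : |Real.tanh x| < 1 :=
  abs_lt.2 ⟨neg_one_lt_tanh x, tanh_lt_one x⟩

lemma continuous_tanh : Continuous Real.tanh := by
  have : Real.tanh = fun x => (Real.exp (2*x) - 1) / (Real.exp (2*x) + 1) := funext tanh_eq'
  rw [this]
  apply Continuous.div (by fun_prop) (by fun_prop)
  intro x; have := Real.exp_pos (2*x); positivity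

noncomputable def myArtanh (y : ℝ) : ℝ := Real.log ((1 + y) / (1 - y)) / 2

lemma tanh_myArtanh {y : ℝ} (h1 : -1 < y) (h2 : y < 1) : Real.tanh (myArtanh y) = y := by
  have hu : 0 < (1 + y) / (1 - y) := by
    apply div_pos <;> linarith
  rw [tanh_eq', myArtanh]
  rw [show 2 * (Real.log ((1 + y) / (1 - y)) / 2) = Real.log ((1+y)/(1-y)) by ring]
  rw [Real.exp_log hu]
  have h3 : (1:ℝ) - y ≠ 0 := by linarith
  field_simp
  ring

lemma myArtanh_tanh (x : ℝ) : myArtanh (Real.tanh x) = x := by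
  have h := Real.exp_pos (2*x)
  rw [tanh_eq', myArtanh]
  have h5 : Real.exp (2*x) + 1 ≠ 0 := by linarith
  have : (1 + (Real.exp (2*x) - 1) / (Real.exp (2*x) + 1)) /
      (1 - (Real.exp (2*x) - 1) / (Real.exp (2*x) + 1)) = Real.exp (2*x) := by
    field_simp
    ring
  rw [this, Real.log_exp]
  ring

lemma continuousAt_myArtanh {y : ℝ} (h1 : -1 < y) (h2 : y < 1) : ContinuousAt myArtanh y := by
  unfold myArtanh
  apply ContinuousAt.div_const
  apply ContinuousAt.log
  · apply ContinuousAt.div (by fun_prop) (by fun_prop)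
    intro h; exact absurd h (by intro hh; linarith)
  · have : (0:ℝ) < (1 + y) / (1 - y) := by apply div_pos <;> linarith
    exact ne_of_gt this

/-! ### Facts about `supNorm` -/

variable {k : ℕ}

lemma supNorm_nonneg (x : EuclideanSpace ℝ (Fin k)) : 0 ≤ supNorm x := norm_nonneg _

lemma supNorm_zero : supNorm (0 : EuclideanSpace ℝ (Fin k)) = 0 := by
  simp [supNorm]

lemma supNorm_pos {x : EuclideanSpace ℝ (Fin k)} (hx : x ≠ 0) : 0 < supNorm x := by
  apply norm_pos_iff.2
  simpa using hx

lemma supNorm_smul (c : ℝ) (x : EuclideanSpace ℝ (Fin k)) :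
    supNorm (c • x) = |c| * supNorm x := by
  unfold supNorm
  rw [WithLp.equiv_apply, WithLp.equiv_apply, WithLp.ofLp_smul, norm_smul, Real.norm_eq_abs]

lemma abs_apply_le_supNorm (x : EuclideanSpace ℝ (Fin k)) (i : Fin k) :
    |x i| ≤ supNorm x := by
  simpa [supNorm, Real.norm_eq_abs] using norm_le_pi_norm ((WithLp.equiv 2 (Fin k → ℝ)) x) i

lemma supNorm_le_of_forall {x : EuclideanSpace ℝ (Fin k)} {r : ℝ} (hr : 0 ≤ r)
    (h : ∀ i, |x i| ≤ r) : supNorm x ≤ r := by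
  rw [supNorm, pi_norm_le_iff_of_nonneg hr]
  simpa [Real.norm_eq_abs] using h

lemma supNorm_lt_of_forall {x : EuclideanSpace ℝ (Fin k)} {r : ℝ} (hr : 0 < r)
    (h : ∀ i, |x i| < r) : supNorm x < r := by
  rw [supNorm, pi_norm_lt_iff hr]
  simpa [Real.norm_eq_abs] using h

lemma abs_apply_le_norm (x : EuclideanSpace ℝ (Fin k)) (i : Fin k) : |x i| ≤ ‖x‖ := by
  rw [EuclideanSpace.norm_eq, ← Real.sqrt_sq_eq_abs]
  apply Real.sqrt_le_sqrt
  have := Finset.single_le_sum (f := fun j => ‖x j‖^2) (fun j _ => by positivity)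
    (Finset.mem_univ i)
  simpa [Real.norm_eq_abs, sq_abs] using this

lemma supNorm_le_norm (x : EuclideanSpace ℝ (Fin k)) : supNorm x ≤ ‖x‖ :=
  supNorm_le_of_forall (norm_nonneg x) (abs_apply_le_norm x)

lemma norm_le_sqrt_mul_supNorm (x : EuclideanSpace ℝ (Fin k)) :
    ‖x‖ ≤ Real.sqrt k * supNorm x := by
  rw [EuclideanSpace.norm_eq]
  rw [← Real.sqrt_sq (supNorm_nonneg x), ← Real.sqrt_mul (by positivity)]
  apply Real.sqrt_le_sqrt
  calc ∑ i, ‖x i‖ ^ 2 ≤ ∑ _i : Fin k, supNorm x ^ 2 := by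
        apply Finset.sum_le_sum
        intro i _
        have h1 := abs_apply_le_supNorm x i
        have h2 : ‖x i‖ = |x i| := Real.norm_eq_abs _
        nlinarith [abs_nonneg (x i)]
    _ = (k : ℝ) * supNorm x ^ 2 := by simp [Finset.sum_const, mul_comm]

lemma continuous_supNorm : Continuous (supNorm (k := k)) :=
  continuous_norm.comp (PiLp.continuous_ofLp 2 (fun _ : Fin k => ℝ))

/-! ### Facts about `squash` and its inverse `unsquash` -/

open Classical in
noncomputable def unsquash {k : ℕ} (y : EuclideanSpace ℝ (Fin k)) :
    EuclideanSpace ℝ (Fin k) :=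
  if y = 0 then 0 else (‖y‖ / supNorm y) • y

lemma squash_zero : squash (0 : EuclideanSpace ℝ (Fin k)) = 0 := by simp [squash]

lemma unsquash_zero : unsquash (0 : EuclideanSpace ℝ (Fin k)) = 0 := by simp [unsquash]

lemma squash_of_ne {x : EuclideanSpace ℝ (Fin k)} (hx : x ≠ 0) :
    squash x = (supNorm x / ‖x‖) • x := by simp [squash, hx]

lemma unsquash_of_ne {y : EuclideanSpace ℝ (Fin k)} (hy : y ≠ 0) :
    unsquash y = (‖y‖ / supNorm y) • y := by simp [unsquash, hy]

lemma norm_squash (x : EuclideanSpace ℝ (Fin k)) : ‖squash x‖ = supNorm x := by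
  by_cases hx : x = 0
  · simp [hx, squash_zero, supNorm_zero]
  · rw [squash_of_ne hx, norm_smul, Real.norm_eq_abs,
      abs_of_nonneg (div_nonneg (supNorm_nonneg x) (norm_nonneg x))]
    rw [div_mul_eq_mul_div]
    exact mul_div_cancel_right₀ _ (norm_ne_zero_iff.2 hx)

lemma squash_ne_zero {x : EuclideanSpace ℝ (Fin k)} (hx : x ≠ 0) : squash x ≠ 0 := by
  intro h
  have := norm_squash x
  rw [h, norm_zero] at this
  exact absurd this.symm (ne_of_gt (supNorm_pos hx))

lemma supNorm_unsquash (y : EuclideanSpace ℝ (Fin k)) : supNorm (unsquash y) = ‖y‖ := by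
  by_cases hy : y = 0
  · simp [hy, unsquash_zero, supNorm_zero]
  · rw [unsquash_of_ne hy, supNorm_smul,
      abs_of_nonneg (div_nonneg (norm_nonneg y) (supNorm_nonneg y))]
    have := supNorm_pos hy
    field_simp

lemma unsquash_ne_zero {y : EuclideanSpace ℝ (Fin k)} (hy : y ≠ 0) : unsquash y ≠ 0 := by
  intro h
  have := supNorm_unsquash y
  rw [h, supNorm_zero] at this
  exact absurd this.symm (norm_ne_zero_iff.2 hy)

lemma unsquash_squash (x : EuclideanSpace ℝ (Fin k)) : unsquash (squash x) = x := by
  by_cases hx : x = 0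
  · simp [hx, squash_zero, unsquash_zero]
  · have hs := squash_ne_zero hx
    have hsp := supNorm_pos hx
    have hnp : (0:ℝ) < ‖x‖ := norm_pos_iff.2 hx
    rw [unsquash_of_ne hs, norm_squash, squash_of_ne hx, supNorm_smul,
      abs_of_nonneg (div_nonneg (supNorm_nonneg x) (norm_nonneg x)), smul_smul]
    rw [show supNorm x / (supNorm x / ‖x‖ * supNorm x) * (supNorm x / ‖x‖) = 1 by
      field_simp]
    simp

lemma squash_unsquash (y : EuclideanSpace ℝ (Fin k)) : squash (unsquash y) = y := by
  by_cases hy : y = 0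
  · simp [hy, unsquash_zero, squash_zero]
  · have hs := unsquash_ne_zero hy
    have hsp := supNorm_pos hy
    have hnp : (0:ℝ) < ‖y‖ := norm_pos_iff.2 hy
    have hnorm : ‖unsquash y‖ = ‖y‖ / supNorm y * ‖y‖ := by
      rw [unsquash_of_ne hy, norm_smul, Real.norm_eq_abs,
        abs_of_nonneg (div_nonneg (norm_nonneg y) (supNorm_nonneg y))]
    rw [squash_of_ne hs, supNorm_unsquash, hnorm, unsquash_of_ne hy, smul_smul]
    rw [show ‖y‖ / (‖y‖ / supNorm y * ‖y‖) * (‖y‖ / supNorm y) = 1 by field_simp]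
    simp

lemma continuous_squash : Continuous (squash (k := k)) := by
  rw [continuous_iff_continuousAt]
  intro x
  by_cases hx : x = 0
  · subst hx
    rw [ContinuousAt, squash_zero]
    apply squeeze_zero_norm (a := fun z : EuclideanSpace ℝ (Fin k) => ‖z‖)
    · intro z; rw [norm_squash]; exact supNorm_le_norm z
    · simpa using (tendsto_norm_zero (E := EuclideanSpace ℝ (Fin k)))
  · apply ContinuousAt.congr
      (f := fun z : EuclideanSpace ℝ (Fin k) => (supNorm z / ‖z‖) • z)
    · exact ((continuous_supNorm.continuousAt.div continuous_norm.continuousAt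
        (norm_ne_zero_iff.2 hx)).smul continuousAt_id)
    · filter_upwards [IsOpen.mem_nhds isOpen_ne hx] with z hz
      exact (squash_of_ne hz).symm

lemma continuous_unsquash : Continuous (unsquash (k := k)) := by
  rw [continuous_iff_continuousAt]
  intro y
  by_cases hy : y = 0
  · subst hy
    rw [ContinuousAt, unsquash_zero]
    apply squeeze_zero_norm
      (a := fun z : EuclideanSpace ℝ (Fin k) => Real.sqrt k * ‖z‖)
    · intro z
      by_cases hz : z = 0
      · simp [hz, unsquash_zero]
      · have hsp := supNorm_pos hz
        rw [unsquash_of_ne hz, norm_smul, Real.norm_eq_abs,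
          abs_of_nonneg (div_nonneg (norm_nonneg z) (supNorm_nonneg z))]
        rw [div_mul_eq_mul_div, div_le_iff₀ hsp]
        have h1 := norm_le_sqrt_mul_supNorm z
        nlinarith [norm_nonneg z, Real.sqrt_nonneg (k:ℝ)]
    · have : Filter.Tendsto (fun z : EuclideanSpace ℝ (Fin k) => Real.sqrt k * ‖z‖)
          (nhds 0) (nhds (Real.sqrt k * 0)) :=
        (tendsto_norm_zero (E := EuclideanSpace ℝ (Fin k))).const_mul _
      simpa using this
  · apply ContinuousAt.congr
      (f := fun z : EuclideanSpace ℝ (Fin k) => (‖z‖ / supNorm z) • z)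
    · exact ((continuous_norm.continuousAt.div continuous_supNorm.continuousAt
        (ne_of_gt (supNorm_pos hy))).smul continuousAt_id)
    · filter_upwards [IsOpen.mem_nhds isOpen_ne hy] with z hz
      exact (unsquash_of_ne hz).symm

lemma continuous_tanhMap : Continuous (tanhMap k) := by
  have : Continuous fun x : EuclideanSpace ℝ (Fin k) =>
      (WithLp.equiv 2 (Fin k → ℝ)).symm
        (fun i => Real.tanh ((WithLp.equiv 2 (Fin k → ℝ)) x i)) := by
    apply (PiLp.continuous_toLp 2 (fun _ : Fin k => ℝ)).comp
    apply continuous_pi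
    intro i
    exact continuous_tanh.comp ((continuous_apply i).comp
      (PiLp.continuous_ofLp 2 (fun _ : Fin k => ℝ)))
  exact this

end SquashTanhAux

open SquashTanhAux in
/-- the composition `s ∘ h` is a homeomorphism from `ℝ^k` onto the
open Euclidean unit ball `{x : ‖x‖_2 < 1}`. -/
theorem squash_comp_tanh_homeomorph_onto_euclidean_ball (k : ℕ) :
    ∃ e : EuclideanSpace ℝ (Fin k) ≃ₜ {x : EuclideanSpace ℝ (Fin k) // ‖x‖ < 1},
      ∀ x : EuclideanSpace ℝ (Fin k), (e x : EuclideanSpace ℝ (Fin k)) = squash (tanhMap k x) := by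
  have hmem : ∀ x : EuclideanSpace ℝ (Fin k), ‖squash (tanhMap k x)‖ < 1 := by
    intro x
    rw [norm_squash]
    exact supNorm_lt_of_forall one_pos (fun i => abs_tanh_lt_one (x i))
  have habs : ∀ (y : {x : EuclideanSpace ℝ (Fin k) // ‖x‖ < 1}) (i : Fin k),
      |unsquash (y : EuclideanSpace ℝ (Fin k)) i| < 1 := by
    intro y i
    calc |unsquash (y : EuclideanSpace ℝ (Fin k)) i|
        ≤ supNorm (unsquash (y : EuclideanSpace ℝ (Fin k))) := abs_apply_le_supNorm _ i
      _ = ‖(y : EuclideanSpace ℝ (Fin k))‖ := supNorm_unsquash _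
      _ < 1 := y.2
  refine ⟨{
    toFun := fun x => ⟨squash (tanhMap k x), hmem x⟩
    invFun := fun y => WithLp.toLp 2 (fun i => myArtanh (unsquash (y : EuclideanSpace ℝ (Fin k)) i))
    left_inv := by
      intro x
      ext i
      show myArtanh (unsquash (squash (tanhMap k x)) i) = x i
      rw [unsquash_squash]
      show myArtanh (Real.tanh (x i)) = x i
      exact myArtanh_tanh (x i)
    right_inv := by
      intro y
      apply Subtype.ext
      show squash (tanhMap k _) = (y : EuclideanSpace ℝ (Fin k))
      have : tanhMap k (WithLp.toLp 2 (fun i => myArtanh (unsquash (y : EuclideanSpace ℝ (Fin k)) i))) =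
          unsquash (y : EuclideanSpace ℝ (Fin k)) := by
        ext i
        show Real.tanh (myArtanh (unsquash (y : EuclideanSpace ℝ (Fin k)) i)) = _
        have h := abs_lt.1 (habs y i)
        exact tanh_myArtanh h.1 h.2
      rw [this, squash_unsquash]
    continuous_toFun := by
      apply Continuous.subtype_mk
      exact continuous_squash.comp continuous_tanhMap
    continuous_invFun := by
      have hc : Continuous fun y : {x : EuclideanSpace ℝ (Fin k) // ‖x‖ < 1} =>
          unsquash (y : EuclideanSpace ℝ (Fin k)) :=
        continuous_unsquash.comp continuous_subtype_val
      have : Continuous fun y : {x : EuclideanSpace ℝ (Fin k) // ‖x‖ < 1} =>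
          (WithLp.equiv 2 (Fin k → ℝ)).symm
            (fun i => myArtanh ((WithLp.equiv 2 (Fin k → ℝ))
              (unsquash (y : EuclideanSpace ℝ (Fin k))) i)) := by
        apply (PiLp.continuous_toLp 2 (fun _ : Fin k => ℝ)).comp
        apply continuous_pi
        intro i
        have hci : Continuous fun y : {x : EuclideanSpace ℝ (Fin k) // ‖x‖ < 1} =>
            (WithLp.equiv 2 (Fin k → ℝ)) (unsquash (y : EuclideanSpace ℝ (Fin k))) i :=
          (continuous_apply i).comp ((PiLp.continuous_ofLp 2 (fun _ : Fin k => ℝ)).comp hc)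
        rw [continuous_iff_continuousAt]
        intro y
        have h := abs_lt.1 (habs y i)
        have := ContinuousAt.comp (x := y) (g := myArtanh)
          (f := fun a : {x : EuclideanSpace ℝ (Fin k) // ‖x‖ < 1} =>
            unsquash (a : EuclideanSpace ℝ (Fin k)) i)
          (continuousAt_myArtanh h.1 h.2) hci.continuousAt
        simpa [Function.comp_def] using this
      exact this
  }, fun x => rfl⟩
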